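/- Let m, n ∈ ℕ, let q ∈ ℝ with 0 < q < 1, and let α ∈ ℝ with α > 0. Then ∫_{−∞}^{∞} (1 + q^{2x}α²) · 𝗛_n[q^xα|q] · 𝗛_m[q^xα|q] · q^{2x²−x} α^{4x} dx = δ_{m,n} · [√(2π) · α · exp(2(log α)² / log(1/q)) / (q^{1/8} √(log(1/q)))] · q^{−n(n−1)/2} (q;q)_n / q^n. -/

import Mathlib

open MeasureTheory

noncomputable section

/-- Finite q-shifted factorial `(a;q)_n` (real version). -/
def qpR (q a : ℝ) (n : ℕ) : ℝ := ∏ j ∈ Finset.range n, (1 - a * q ^ j)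

/-- Infinite q-shifted factorial `(a;q)_∞` (real version). -/
def qpiR (q a : ℝ) : ℝ := ∏' j : ℕ, (1 - a * q ^ j)

/-- The continuous q⁻¹-Hermite polynomial `𝗛_n[z|q]` (real version). -/
def HcR (q z : ℝ) (n : ℕ) : ℝ :=
  z ^ n * ∑ k ∈ Finset.range (n + 1),
    qpR q (q ^ (-(n : ℤ))) k / qpR q q k * (-1) ^ k * q ^ ((k : ℤ) * ((k : ℤ) - 1) / 2) *
      (-(q / z ^ 2)) ^ k

open Finset

namespace CQH

variable {q : ℝ}

lemma qpow_pos (hq0 : 0 < q) (t : ℝ) : 0 < q ^ t := Real.rpow_pos_of_pos hq0 t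

lemma rpow_mul_rpow (hq0 : 0 < q) (a b : ℝ) : q ^ a * q ^ b = q ^ (a + b) :=
  (Real.rpow_add hq0 a b).symm

lemma one_sub_qpow_pos (hq0 : 0 < q) (hq1 : q < 1) {t : ℝ} (ht : 0 < t) :
    0 < 1 - q ^ t := by
  have : q ^ t < 1 := Real.rpow_lt_one hq0.le hq1 ht
  linarith

/-- shifted q-product with real exponents -/
def P (q u : ℝ) (k : ℕ) : ℝ := ∏ j ∈ Finset.range k, (1 - q ^ (u + (j : ℝ)))

lemma P_congr {u v : ℝ} (k : ℕ) (h : u = v) : P q u k = P q v k := by rw [h]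

lemma P_zero (u : ℝ) : P q u 0 = 1 := by simp [P]

lemma P_succ (u : ℝ) (k : ℕ) : P q u (k + 1) = P q u k * (1 - q ^ (u + k)) := by
  rw [P, Finset.prod_range_succ]; rfl

lemma P_succ' (u : ℝ) (k : ℕ) : P q u (k + 1) = (1 - q ^ u) * P q (u + 1) k := by
  rw [P, Finset.prod_range_succ', mul_comm]
  congr 1
  · norm_num
  · refine Finset.prod_congr rfl fun j _ => ?_
    have h : u + ((j + 1 : ℕ) : ℝ) = (u + 1) + (j : ℝ) := by push_cast; ring
    rw [h]

lemma qpR_rpow (hq0 : 0 < q) (u : ℝ) (k : ℕ) : qpR q (q ^ u) k = P q u k := by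
  refine Finset.prod_congr rfl fun j _ => ?_
  rw [← Real.rpow_natCast q j, ← Real.rpow_add hq0]

lemma qpR_q (hq0 : 0 < q) (k : ℕ) : qpR q q k = P q 1 k := by
  have := qpR_rpow hq0 1 k
  rwa [Real.rpow_one] at this

lemma P_pos (hq0 : 0 < q) (hq1 : q < 1) {u : ℝ} (hu : 0 < u) (k : ℕ) : 0 < P q u k :=
  Finset.prod_pos fun j _ => one_sub_qpow_pos hq0 hq1 (by positivity)

lemma P_one_ne_zero (hq0 : 0 < q) (hq1 : q < 1) (k : ℕ) : P q 1 k ≠ 0 :=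
  (P_pos hq0 hq1 one_pos k).ne'

lemma qpR_q_ne_zero (hq0 : 0 < q) (hq1 : q < 1) (k : ℕ) : qpR q q k ≠ 0 := by
  rw [qpR_q hq0]; exact P_one_ne_zero hq0 hq1 k

/-- vanishing of the shifted product -/
lemma P_vanish (hq0 : 0 < q) {k : ℕ} {u : ℝ} (i : ℕ) (hik : i < k) (hiu : u + i = 0) :
    P q u k = 0 := by
  refine Finset.prod_eq_zero (Finset.mem_range.2 hik) ?_
  rw [hiu, Real.rpow_zero]; ring

/-- the coefficient `(q^{-n};q)_k / (q;q)_k`. -/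
def bq (q : ℝ) (n k : ℕ) : ℝ := P q (-(n : ℝ)) k / P q 1 k

lemma bq_zero_left (n : ℕ) : bq q n 0 = 1 := by simp [bq, P]

lemma bq_top (hq0 : 0 < q) (n : ℕ) : bq q n (n + 1) = 0 := by
  unfold bq
  rw [P_vanish hq0 n (by omega) (by ring), zero_div]

/-- Pascal-type relation. -/
lemma bq_pascal (hq0 : 0 < q) (hq1 : q < 1) (n k : ℕ) :
    bq q (n + 1) (k + 1) = bq q n (k + 1) - q ^ (-(n : ℝ) - 1) * bq q n k := by
  unfold bq
  have h1 : P q (-((n:ℕ)+1:ℕ) : ℝ) (k+1) = (1 - q ^ (-(n:ℝ) - 1)) * P q (-(n:ℝ)) k := by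
    rw [P_congr (k+1) (show (-((n:ℕ)+1:ℕ) : ℝ) = -(n:ℝ)-1 by push_cast; ring), P_succ']
    rw [P_congr k (show -(n:ℝ)-1+1 = -(n:ℝ) by ring)]
  have h2 : P q (-(n:ℝ)) (k+1) = P q (-(n:ℝ)) k * (1 - q ^ ((k:ℝ) - n)) := by
    rw [P_succ, show -(n:ℝ) + (k:ℝ) = (k:ℝ) - n from by ring]
  have h3 : P q 1 (k+1) = P q 1 k * (1 - q ^ ((1:ℝ) + k)) := P_succ 1 k
  push_cast at h1 ⊢
  rw [h1, h2, h3]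
  have hd1 : P q 1 k ≠ 0 := P_one_ne_zero hq0 hq1 k
  have hd2 : (1 - q ^ ((1:ℝ) + k)) ≠ 0 := (one_sub_qpow_pos hq0 hq1 (by positivity)).ne'
  have key : q ^ ((k:ℝ) - n) = q ^ (-(n:ℝ) - 1) * q ^ ((1:ℝ) + k) := by
    rw [rpow_mul_rpow hq0]; ring_nf
  field_simp
  rw [key]; ring

/-- The q-binomial theorem in the needed form. -/
lemma qbt (hq0 : 0 < q) (hq1 : q < 1) (n : ℕ) (y : ℝ) :
    ∑ k ∈ range (n + 1), bq q n k * y ^ k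
      = ∏ j ∈ range n, (1 - y * q ^ ((j : ℝ) - n)) := by
  induction n generalizing y with
  | zero => simp [bq_zero_left]
  | succ n ih =>
    have hL : ∑ k ∈ range (n + 2), bq q (n+1) k * y ^ k
        = (1 - y * q ^ (-(n:ℝ) - 1)) * ∑ k ∈ range (n + 1), bq q n k * y ^ k := by
      rw [Finset.sum_range_succ' (fun k => bq q (n+1) k * y ^ k)]
      simp only [bq_zero_left, pow_zero, mul_one]
      have hterm : ∀ k, bq q (n+1) (k+1) * y ^ (k+1)
          = bq q n (k+1) * y ^ (k+1) - (y * q ^ (-(n:ℝ)-1)) * (bq q n k * y ^ k) := by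
        intro k
        rw [bq_pascal hq0 hq1]
        ring
      rw [Finset.sum_congr rfl fun k _ => hterm k, Finset.sum_sub_distrib, ← Finset.mul_sum]
      have hshift : ∑ k ∈ range (n+1), bq q n (k+1) * y ^ (k+1)
          = ∑ k ∈ range (n+2), bq q n k * y ^ k - 1 := by
        rw [Finset.sum_range_succ' (fun k => bq q n k * y ^ k)]
        simp [bq_zero_left]
      rw [hshift, Finset.sum_range_succ, bq_top hq0]
      ring
    have hR : ∏ j ∈ range (n+1), (1 - y * q ^ ((j:ℝ) - ((n:ℕ)+1:ℕ)))
        = (1 - y * q ^ (-(n:ℝ)-1)) * ∏ j ∈ range n, (1 - y * q ^ ((j:ℝ) - n)) := by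
      rw [Finset.prod_range_succ' (fun j => 1 - y * q ^ ((j:ℝ) - ((n:ℕ)+1:ℕ)))]
      rw [mul_comm (∏ j ∈ range n, (1 - y * q ^ (((j+1:ℕ):ℝ) - ((n:ℕ)+1:ℕ)))) _]
      congr 1
      · have h0 : (((0:ℕ):ℝ) - ((n:ℕ)+1:ℕ)) = -(n:ℝ)-1 := by push_cast; ring
        rw [h0]
      · refine Finset.prod_congr rfl fun j _ => ?_
        have h : ((j + 1 : ℕ) : ℝ) - ((n:ℕ)+1:ℕ) = (j : ℝ) - n := by push_cast; ring
        rw [h]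
    rw [hL, ih, hR]

/-- closed form of `(q^{-(k+d)};q)_k`. -/
lemma P_negpow (hq0 : 0 < q) (hq1 : q < 1) :
    ∀ k d : ℕ, P q (-((k + d : ℕ) : ℝ)) k
      = (-1)^k * q ^ (((k:ℝ)*((k:ℝ)-1))/2 - ((k:ℝ)+(d:ℝ))*(k:ℝ)) * P q 1 (k+d) / P q 1 d := by
  intro k
  induction k with
  | zero =>
    intro d
    rw [P_zero]
    norm_num
    rw [div_self (P_one_ne_zero hq0 hq1 d)]
  | succ k ih =>
    intro d
    rw [P_succ']
    rw [P_congr k (show (-(((k+1)+d:ℕ):ℝ)) + 1 = -((k+d:ℕ):ℝ) by push_cast; ring)]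
    rw [ih d]
    rw [show ((k+1)+d) = (k+d)+1 by omega, P_succ 1 (k+d)]
    rw [show (-((k+d+1:ℕ):ℝ)) = -((k:ℝ)+1+(d:ℝ)) by push_cast; ring]
    rw [show (1:ℝ) + ((k+d:ℕ):ℝ) = (k:ℝ)+1+(d:ℝ) by push_cast; ring]
    have h2 : q ^ (-((k:ℝ)+1+(d:ℝ))) * q ^ ((k:ℝ)+1+(d:ℝ)) = 1 := by
      rw [rpow_mul_rpow hq0, show -((k:ℝ)+1+(d:ℝ))+((k:ℝ)+1+(d:ℝ)) = 0 by ring,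
        Real.rpow_zero]
    have h1 : (1:ℝ) - q ^ (-((k:ℝ)+1+(d:ℝ)))
        = -(q ^ (-((k:ℝ)+1+(d:ℝ)))) * (1 - q ^ ((k:ℝ)+1+(d:ℝ))) := by
      rw [neg_mul, mul_one_sub, h2]; ring
    rw [h1]
    have h3 : q ^ (-((k:ℝ)+1+(d:ℝ))) * q ^ ((k:ℝ)*((k:ℝ)-1)/2 - ((k:ℝ)+(d:ℝ))*(k:ℝ))
        = q ^ ((((k+1:ℕ)):ℝ)*((((k+1:ℕ)):ℝ)-1)/2 - ((((k+1:ℕ)):ℝ)+(d:ℝ))*(((k+1:ℕ)):ℝ)) := by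
      rw [rpow_mul_rpow hq0]; congr 1; push_cast; ring
    rw [← h3, pow_succ]
    ring

/-- main coefficient `e_{n,k}` -/
def eC (q : ℝ) (n k : ℕ) : ℝ := bq q n k * q ^ (((k:ℝ)*((k:ℝ)+1))/2)

lemma eC_formula (hq0 : 0 < q) (hq1 : q < 1) {n k : ℕ} (hkn : k ≤ n) :
    eC q n k = (-1)^k * q ^ ((k:ℝ)^2 - (n:ℝ)*(k:ℝ)) * P q 1 n / (P q 1 k * P q 1 (n-k)) := by
  obtain ⟨d, rfl⟩ : ∃ d, n = k + d := ⟨n - k, by omega⟩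
  unfold eC bq
  rw [P_negpow hq0 hq1 k d, show (k+d) - k = d by omega]
  have hE : q ^ (((k:ℝ)*((k:ℝ)-1))/2 - ((k:ℝ)+(d:ℝ))*(k:ℝ)) * q ^ (((k:ℝ)*((k:ℝ)+1))/2)
      = q ^ ((k:ℝ)^2 - (((k+d:ℕ)):ℝ)*(k:ℝ)) := by
    rw [rpow_mul_rpow hq0]; congr 1; push_cast; ring
  rw [← hE]
  field_simp [P_one_ne_zero hq0 hq1]

lemma eC_reflect (hq0 : 0 < q) (hq1 : q < 1) {n k : ℕ} (hkn : k ≤ n) :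
    eC q n (n - k) = (-1)^n * eC q n k := by
  rw [eC_formula hq0 hq1 (Nat.sub_le n k), eC_formula hq0 hq1 hkn]
  rw [show n - (n - k) = k by omega]
  rw [Nat.cast_sub hkn]
  rw [show ((n:ℝ)-(k:ℝ))^2 - (n:ℝ)*((n:ℝ)-(k:ℝ)) = (k:ℝ)^2 - (n:ℝ)*(k:ℝ) by ring]
  rw [pow_sub₀ (-1:ℝ) (by norm_num) hkn]
  have hsq : ((-1:ℝ)^k) * ((-1:ℝ)^k) = 1 := by
    rw [← pow_add, ← two_mul, pow_mul]; norm_num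
  field_simp [P_one_ne_zero hq0 hq1]
  ring_nf
  rw [pow_mul]
  rw [show ((-1:ℝ)^k)^2 = 1 by rw [← pow_mul, mul_comm, pow_mul]; norm_num]

/-- the Gaussian-moment factor `q^{-(t-1)^2/8}` -/
def G (q t : ℝ) : ℝ := q ^ (-((t - 1) ^ 2 / 8))

lemma G_congr {s t : ℝ} (h : s = t) : G q s = G q t := by rw [h]

lemma eC_zero (n : ℕ) : eC q n 0 = 1 := by
  simp [eC, bq_zero_left]

lemma prod_y (hq0 : 0 < q) (u : ℝ) (n : ℕ) :
    ∏ j ∈ range n, (1 - q ^ u * q ^ ((j:ℝ) - n)) = P q (u - n) n := by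
  refine Finset.prod_congr rfl fun j _ => ?_
  rw [rpow_mul_rpow hq0, show u + ((j:ℝ) - n) = (u - n) + (j:ℝ) by ring]

lemma term_branch (hq0 : 0 < q) (n k : ℕ) (a c : ℝ) :
    eC q n k * G q ((n:ℝ) + a - 2*k + c)
      = G q ((n:ℝ) + a + c) * (bq q n k * (q ^ (((n:ℝ) + a + c)/2)) ^ k) := by
  unfold eC G
  rw [← Real.rpow_natCast (q ^ (((n:ℝ) + a + c)/2)) k, ← Real.rpow_mul hq0.le]
  rw [mul_assoc, rpow_mul_rpow hq0]
  rw [mul_comm (q ^ (-(((n:ℝ) + a + c - 1) ^ 2 / 8))) _, mul_assoc, rpow_mul_rpow hq0]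
  congr 1
  ring

lemma inner_sum (hq0 : 0 < q) (hq1 : q < 1) (n : ℕ) (a : ℝ) :
    ∑ k ∈ range (n + 1), eC q n k * (G q ((n:ℝ) + a - 2*k) + G q ((n:ℝ) + a - 2*k + 2))
      = G q ((n:ℝ) + a) * P q ((a - (n:ℝ))/2) n
        + G q ((n:ℝ) + a + 2) * P q ((a - (n:ℝ))/2 + 1) n := by
  have key : ∀ c : ℝ, ∑ k ∈ range (n + 1), eC q n k * G q ((n:ℝ) + a - 2*k + c)
      = G q ((n:ℝ) + a + c) * P q (((n:ℝ) + a + c)/2 - n) n := by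
    intro c
    have h1 : ∀ k ∈ range (n+1), eC q n k * G q ((n:ℝ) + a - 2*k + c)
        = G q ((n:ℝ) + a + c) * (bq q n k * (q ^ (((n:ℝ) + a + c)/2)) ^ k) :=
      fun k _ => term_branch hq0 n k a c
    rw [Finset.sum_congr rfl h1, ← Finset.mul_sum, qbt hq0 hq1, prod_y hq0]
  have k0 := key 0
  have k2 := key 2
  simp only [add_zero] at k0
  have e0 : ∀ k : ℕ, (n:ℝ) + a - 2*(k:ℝ) + 0 = (n:ℝ) + a - 2*k := by intro k; ring
  rw [show (∑ k ∈ range (n + 1), eC q n k * (G q ((n:ℝ) + a - 2*k) + G q ((n:ℝ) + a - 2*k + 2)))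
      = (∑ k ∈ range (n + 1), eC q n k * G q ((n:ℝ) + a - 2*k))
        + (∑ k ∈ range (n + 1), eC q n k * G q ((n:ℝ) + a - 2*k + 2)) by
    rw [← Finset.sum_add_distrib]; exact Finset.sum_congr rfl fun k _ => by ring]
  rw [k0, k2]
  rw [P_congr n (show ((n:ℝ) + a)/2 - n = (a - (n:ℝ))/2 by ring)]
  rw [P_congr n (show ((n:ℝ) + a + 2)/2 - n = (a - (n:ℝ))/2 + 1 by ring)]

/-- the central double sum -/
def SS (q : ℝ) (n m : ℕ) : ℝ :=
  ∑ k ∈ range (n+1), ∑ l ∈ range (m+1),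
    eC q n k * eC q m l *
      (G q ((n:ℝ) + m - 2*k - 2*l) + G q ((n:ℝ) + m - 2*k - 2*l + 2))

lemma SS_symm (n m : ℕ) : SS q n m = SS q m n := by
  unfold SS
  rw [Finset.sum_comm]
  refine Finset.sum_congr rfl fun l _ => Finset.sum_congr rfl fun k _ => ?_
  rw [G_congr (show (n:ℝ) + m - 2*k - 2*l = (m:ℝ) + n - 2*l - 2*k by ring),
      G_congr (show (n:ℝ) + m - 2*k - 2*l + 2 = (m:ℝ) + n - 2*l - 2*k + 2 by ring)]
  ring

lemma SS_rw (hq0 : 0 < q) (hq1 : q < 1) (n m : ℕ) :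
    SS q n m = ∑ l ∈ range (m+1), eC q m l *
      (G q ((n:ℝ) + ((m:ℝ) - 2*l)) * P q ((((m:ℝ) - 2*l) - (n:ℝ))/2) n
        + G q ((n:ℝ) + ((m:ℝ) - 2*l) + 2) * P q ((((m:ℝ) - 2*l) - (n:ℝ))/2 + 1) n) := by
  unfold SS
  rw [Finset.sum_comm]
  refine Finset.sum_congr rfl fun l _ => ?_
  rw [← inner_sum hq0 hq1 n ((m:ℝ) - 2*l), Finset.mul_sum]
  refine Finset.sum_congr rfl fun k _ => ?_
  rw [G_congr (show (n:ℝ) + m - 2*k - 2*l = (n:ℝ) + ((m:ℝ) - 2*l) - 2*k by ring),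
      G_congr (show (n:ℝ) + m - 2*k - 2*l + 2 = (n:ℝ) + ((m:ℝ) - 2*l) - 2*k + 2 by ring)]
  ring

lemma G_neg (t : ℝ) : G q (-t) = G q (t + 2) := by
  unfold G; congr 1; ring

lemma G_neg' (t : ℝ) : G q (-t + 2) = G q t := by
  unfold G; congr 1; ring

lemma SS_odd (hq0 : 0 < q) (hq1 : q < 1) (n m : ℕ) (hodd : Odd (n + m)) :
    SS q n m = 0 := by
  have key : SS q n m = (-1)^(n+m) * SS q n m := by
    calc SS q n m = ∑ k ∈ range (n+1), ∑ l ∈ range (m+1),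
        eC q n (n-k) * eC q m (m-l) *
          (G q ((n:ℝ) + m - 2*((n-k:ℕ):ℝ) - 2*((m-l:ℕ):ℝ))
            + G q ((n:ℝ) + m - 2*((n-k:ℕ):ℝ) - 2*((m-l:ℕ):ℝ) + 2)) := by
          unfold SS
          rw [← Finset.sum_range_reflect]
          refine Finset.sum_congr rfl fun k _ => ?_
          rw [← Finset.sum_range_reflect]
          refine Finset.sum_congr rfl fun l _ => ?_
          rw [show n + 1 - 1 - k = n - k by omega, show m + 1 - 1 - l = m - l by omega]
      _ = (-1)^(n+m) * SS q n m := ?_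
    unfold SS
    rw [Finset.mul_sum]
    refine Finset.sum_congr rfl fun k hk => ?_
    rw [Finset.mul_sum]
    refine Finset.sum_congr rfl fun l hl => ?_
    have hkn : k ≤ n := by have := Finset.mem_range.1 hk; omega
    have hlm : l ≤ m := by have := Finset.mem_range.1 hl; omega
    rw [eC_reflect hq0 hq1 hkn, eC_reflect hq0 hq1 hlm]
    have harg : (n:ℝ) + m - 2*((n - k : ℕ):ℝ) - 2*((m - l : ℕ):ℝ)
        = -((n:ℝ) + m - 2*k - 2*l) := by
      rw [Nat.cast_sub hkn, Nat.cast_sub hlm]; ring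
    rw [G_congr harg, G_congr (show (n:ℝ) + m - 2*((n - k : ℕ):ℝ) - 2*((m - l : ℕ):ℝ) + 2
        = -((n:ℝ) + m - 2*k - 2*l) + 2 by rw [Nat.cast_sub hkn, Nat.cast_sub hlm]; ring)]
    rw [G_neg, G_neg']
    rw [pow_add]
    ring
  rw [hodd.neg_one_pow] at key
  linarith

lemma SS_lt (hq0 : 0 < q) (hq1 : q < 1) (n m t : ℕ) (hnm : n = m + 2*(t+1)) :
    SS q n m = 0 := by
  rw [SS_rw hq0 hq1]
  refine Finset.sum_eq_zero fun l hl => ?_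
  have hlm : l ≤ m := by have := Finset.mem_range.1 hl; omega
  have h1 : P q ((((m:ℝ) - 2*l) - (n:ℝ))/2) n = 0 := by
    refine P_vanish hq0 (l + t + 1) (by omega) ?_
    subst hnm; push_cast; ring
  have h2 : P q ((((m:ℝ) - 2*l) - (n:ℝ))/2 + 1) n = 0 := by
    refine P_vanish hq0 (l + t) (by omega) ?_
    subst hnm; push_cast; ring
  rw [h1, h2]
  ring

lemma G_zero : G q 0 = q ^ (-(1:ℝ)/8) := by
  unfold G; norm_num

lemma SS_diag (hq0 : 0 < q) (hq1 : q < 1) (n : ℕ) :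
    SS q n n = 2 * q ^ (-(1:ℝ)/8 - ((n:ℝ)^2 + (n:ℝ))/2) * P q 1 n := by
  have hP1 : P q 1 n ≠ 0 := P_one_ne_zero hq0 hq1 n
  have hPn : P q (-(n:ℝ)) n
      = (-1)^n * q ^ ((n:ℝ)*((n:ℝ)-1)/2 - ((n:ℝ)+((0:ℕ):ℝ))*(n:ℝ)) * P q 1 n := by
    have h := P_negpow hq0 hq1 n 0
    rw [Nat.add_zero] at h
    rw [h, P_zero, div_one]
  rcases Nat.eq_zero_or_pos n with hn | hn
  · subst hn
    unfold SS
    rw [Finset.sum_range_one, Finset.sum_range_one, eC_zero]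
    rw [G_congr (show (↑(0:ℕ):ℝ) + ↑(0:ℕ) - 2*↑(0:ℕ) - 2*↑(0:ℕ) = 0 by norm_num)]
    rw [G_congr (show (↑(0:ℕ):ℝ) + ↑(0:ℕ) - 2*↑(0:ℕ) - 2*↑(0:ℕ) + 2 = -0 + 2 by norm_num),
      G_neg']
    rw [G_zero]
    push_cast
    norm_num [P_zero]
    ring
  · obtain ⟨p, rfl⟩ : ∃ p, n = p + 1 := ⟨n - 1, by omega⟩
    set n := p + 1 with hnp
    rw [SS_rw hq0 hq1]
    have h0mem : 0 ∈ range (n+1) := Finset.mem_range.2 (by omega)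
    have hnmem : n ∈ range (n+1) := Finset.mem_range.2 (by omega)
    refine (Finset.sum_eq_add_of_mem 0 n h0mem hnmem (by omega) ?_).trans ?_
    · intro c hc hcn
      have hc1 : 1 ≤ c := by omega
      have hcp : c ≤ p := by
        have := Finset.mem_range.1 hc
        omega
      have h1 : P q ((((n:ℝ) - 2*(c:ℝ)) - (n:ℝ))/2) n = 0 := by
        refine P_vanish hq0 c (by omega) ?_
        push_cast; ring
      have h2 : P q ((((n:ℝ) - 2*(c:ℝ)) - (n:ℝ))/2 + 1) n = 0 := by
        refine P_vanish hq0 (c-1) (by omega) ?_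
        rw [Nat.cast_sub hc1]; push_cast; ring
      rw [h1, h2]
      ring
    · have hz1 : P q ((((n:ℝ) - 2*((0:ℕ):ℝ)) - (n:ℝ))/2) n = 0 := by
        refine P_vanish hq0 0 (by omega) ?_
        push_cast; ring
      have hz2 : P q ((((n:ℝ) - 2*((n:ℕ):ℝ)) - (n:ℝ))/2 + 1) n = 0 := by
        refine P_vanish hq0 p (by omega) ?_
        push_cast [hnp]; ring
      rw [hz1, hz2, eC_zero]
      rw [P_congr n (show (((n:ℝ) - 2*((0:ℕ):ℝ)) - (n:ℝ))/2 + 1 = 1 by push_cast; ring)]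
      rw [P_congr n (show (((n:ℝ) - 2*((n:ℕ):ℝ)) - (n:ℝ))/2 = -(n:ℝ) by push_cast; ring)]
      rw [G_congr (show (n:ℝ) + ((n:ℝ) - 2*((n:ℕ):ℝ)) = 0 by push_cast; ring), G_zero]
      rw [hPn]
      unfold eC bq
      rw [hPn]
      have hmerge : q ^ ((n:ℝ)*((n:ℝ)-1)/2 - ((n:ℝ)+((0:ℕ):ℝ))*(n:ℝ))
            * q ^ ((n:ℝ)*((n:ℝ)-1)/2 - ((n:ℝ)+((0:ℕ):ℝ))*(n:ℝ))
            * q ^ (((n:ℝ)*((n:ℝ)+1))/2) * q ^ (-(1:ℝ)/8)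
          = q ^ (-(1:ℝ)/8 - ((n:ℝ)^2 + (n:ℝ))/2) := by
        rw [rpow_mul_rpow hq0, rpow_mul_rpow hq0, rpow_mul_rpow hq0]
        congr 1; push_cast; ring
      have hG1 : G q ((n:ℝ) + ((n:ℝ) - 2*((0:ℕ):ℝ)) + 2)
          = q ^ (-(1:ℝ)/8 - ((n:ℝ)^2 + (n:ℝ))/2) := by
        unfold G
        congr 1; push_cast; ring
      rw [hG1]
      have hsign : ((-1:ℝ)^n) * ((-1:ℝ)^n) = 1 := by
        rw [← pow_add, ← two_mul, pow_mul]; norm_num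
      set u := q ^ ((n:ℝ)*((n:ℝ)-1)/2 - ((n:ℝ)+((0:ℕ):ℝ))*(n:ℝ)) with hu
      set v := q ^ (((n:ℝ)*((n:ℝ)+1))/2) with hv
      set w := q ^ (-(1:ℝ)/8) with hw
      set y := q ^ (-(1:ℝ)/8 - ((n:ℝ)^2 + (n:ℝ))/2) with hy
      have final : y * P q 1 n + ((-1)^n * u * P q 1 n / P q 1 n * v) * (w * ((-1)^n * u * P q 1 n)) = 2 * y * P q 1 n := by
        rw [mul_div_assoc, div_self hP1, mul_one]
        calc y * P q 1 n + (-1) ^ n * u * v * (w * ((-1) ^ n * u * P q 1 n))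
            = y * P q 1 n + ((-1)^n * (-1)^n) * ((u * u * v * w) * P q 1 n) := by ring
          _ = 2 * y * P q 1 n := by rw [hsign, hmerge]; ring
      convert final using 2 <;> ring

lemma gauss_rewrite {B : ℝ} (hB : B < 0) (u v : ℝ) :
    (fun x : ℝ => Real.exp (B*x^2 + u*x + v))
      = fun x : ℝ => Real.exp (u^2/(4*(-B)) + v) * Real.exp (-(-B)*(x - (-(u/(2*B))))^2) := by
  funext x
  rw [← Real.exp_add]
  congr 1
  have hB' : B ≠ 0 := hB.ne
  field_simp
  ring

lemma gauss_integrable' {B : ℝ} (hB : B < 0) (u v : ℝ) :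
    Integrable (fun x : ℝ => Real.exp (B*x^2 + u*x + v)) := by
  rw [gauss_rewrite hB u v]
  exact ((integrable_exp_neg_mul_sq (by linarith : (0:ℝ) < -B)).comp_sub_right
    (-(u/(2*B)))).const_mul _

lemma gauss_integral' {B : ℝ} (hB : B < 0) (u v : ℝ) :
    ∫ x : ℝ, Real.exp (B*x^2 + u*x + v)
      = Real.sqrt (Real.pi / (-B)) * Real.exp (u^2/(4*(-B)) + v) := by
  rw [gauss_rewrite hB u v]
  rw [MeasureTheory.integral_const_mul]
  have := MeasureTheory.integral_sub_right_eq_self (μ := MeasureTheory.volume)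
    (fun x : ℝ => Real.exp (-(-B)*x^2)) (-(u/(2*B)))
  rw [this, integral_gaussian]
  ring

lemma HcR_expand (hq0 : 0 < q) (hq1 : q < 1) {z : ℝ} (hz : 0 < z) (n : ℕ) :
    HcR q z n = ∑ k ∈ range (n + 1), eC q n k * z ^ ((n:ℝ) - 2*(k:ℝ)) := by
  unfold HcR
  rw [Finset.mul_sum]
  refine Finset.sum_congr rfl fun k _ => ?_
  have hqz : qpR q (q ^ (-(n : ℤ))) k = P q (-(n:ℝ)) k := by
    have h1 : (q : ℝ) ^ (-(n : ℤ)) = q ^ (-(n:ℝ)) := by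
      rw [← Real.rpow_intCast q (-(n:ℤ))]
      norm_num
    rw [h1, qpR_rpow hq0]
  have hzp : qpR q q k = P q 1 k := qpR_q hq0 k
  have hdvd : 2 ∣ k * (k - 1) := by
    rcases Nat.even_or_odd k with he | ho
    · exact Dvd.dvd.mul_right he.two_dvd _
    · exact Dvd.dvd.mul_left (Nat.Odd.sub_odd ho odd_one).two_dvd _
  have hev2 : k * (k - 1) / 2 * 2 = k * (k - 1) := Nat.div_mul_cancel hdvd
  have hcastR : ((k * (k - 1) : ℕ) : ℝ) = (k:ℝ) * ((k:ℝ) - 1) := by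
    cases k with
    | zero => norm_num
    | succ j => push_cast [Nat.succ_sub_one]; ring
  have hrealhalf : ((k * (k - 1) / 2 : ℕ) : ℝ) * 2 = (k:ℝ) * ((k:ℝ) - 1) := by
    have h6 : ((k*(k-1)/2*2 : ℕ) : ℝ) = ((k*(k-1) : ℕ) : ℝ) := by rw [hev2]
    calc ((k*(k-1)/2 : ℕ):ℝ) * 2 = ((k*(k-1)/2*2 : ℕ) : ℝ) := by push_cast; ring
      _ = (k:ℝ)*((k:ℝ)-1) := by rw [h6, hcastR]
  have hcastZ : ((k * (k - 1) : ℕ) : ℤ) = (k:ℤ) * ((k:ℤ) - 1) := by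
    cases k with
    | zero => norm_num
    | succ j => push_cast [Nat.succ_sub_one]; ring
  have hint : (q:ℝ) ^ ((k : ℤ) * ((k : ℤ) - 1) / 2) = q ^ (k*(k-1)/2 : ℕ) := by
    rw [← zpow_natCast q (k*(k-1)/2 : ℕ)]
    congr 1
    rw [← hcastZ]
    omega
  have hneg : (-(q / z^2))^k = (-1)^k * q^k / z^(2*k) := by
    rw [neg_pow, div_pow, ← pow_mul]
    ring
  have hqq : (q : ℝ) ^ (k*(k-1)/2 : ℕ) * q ^ k = q ^ (((k:ℝ)*((k:ℝ)+1))/2) := by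
    rw [← pow_add, ← Real.rpow_natCast q (k*(k-1)/2 + k)]
    congr 1
    have h5 : ((k*(k-1)/2 + k : ℕ) : ℝ) = ((k*(k-1)/2 : ℕ):ℝ) + k := by push_cast; ring
    rw [h5]
    ring_nf
    ring_nf at hrealhalf
    linarith
  have hzz : z ^ n / z ^ (2*k) = z ^ ((n:ℝ) - 2*(k:ℝ)) := by
    rw [Real.rpow_sub hz, Real.rpow_natCast]
    congr 1
    rw [show (2:ℝ)*(k:ℝ) = ((2*k : ℕ) : ℝ) by push_cast; ring, Real.rpow_natCast]
  rw [hqz, hzp, hint, hneg]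
  unfold eC bq
  rw [← hqq, ← hzz]
  have hzk : z ^ (2*k) ≠ 0 := by positivity
  have hsign : ((-1:ℝ)^k) * ((-1:ℝ)^k) = 1 := by
    rw [← pow_add, ← two_mul, pow_mul]; norm_num
  have hP1 : P q 1 k ≠ 0 := P_one_ne_zero hq0 hq1 k
  field_simp
  ring_nf
  rw [mul_comm k 2, pow_mul]
  norm_num

lemma SS_eval (hq0 : 0 < q) (hq1 : q < 1) (n m : ℕ) :
    SS q n m = (if m = n then 1 else 0)
      * (2 * q ^ (-(1:ℝ)/8 - ((n:ℝ)^2 + (n:ℝ))/2) * P q 1 n) := by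
  rcases eq_or_ne m n with h | h
  · subst h; rw [if_pos rfl, one_mul, SS_diag hq0 hq1]
  · rw [if_neg h, zero_mul]
    rcases Nat.even_or_odd (n + m) with he | ho
    · obtain ⟨c, hc⟩ := he
      rcases lt_or_gt_of_ne h with hlt | hgt
      · obtain ⟨t, ht⟩ : ∃ t, n = m + 2*(t+1) := ⟨(n - m)/2 - 1, by omega⟩
        exact SS_lt hq0 hq1 n m t ht
      · rw [SS_symm]
        obtain ⟨t, ht⟩ : ∃ t, m = n + 2*(t+1) := ⟨(m - n)/2 - 1, by omega⟩
        exact SS_lt hq0 hq1 m n t ht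
    · exact SS_odd hq0 hq1 n m ho

lemma zpow_half (hq0 : 0 < q) (n : ℕ) :
    (q:ℝ) ^ (-((n : ℤ) * ((n : ℤ) - 1) / 2)) = q ^ (-((n:ℝ)*((n:ℝ)-1))/2) := by
  rw [← Real.rpow_intCast q (-((n : ℤ) * ((n : ℤ) - 1) / 2))]
  congr 1
  have hdvd : (2:ℤ) ∣ (n:ℤ) * ((n:ℤ) - 1) := by
    rcases Int.even_or_odd (n:ℤ) with he | ho
    · exact Dvd.dvd.mul_right he.two_dvd _
    · exact Dvd.dvd.mul_left (Odd.sub_odd ho odd_one).two_dvd _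
  have hev : (n:ℤ) * ((n:ℤ) - 1) / 2 * 2 = (n:ℤ) * ((n:ℤ) - 1) := Int.ediv_mul_cancel hdvd
  have hcast : (((n:ℤ) * ((n:ℤ) - 1) / 2 : ℤ) : ℝ) * 2 = (n:ℝ) * ((n:ℝ) - 1) := by
    exact_mod_cast hev
  push_cast
  linarith

lemma sqrt_match (hL : 0 < (-Real.log q)) :
    Real.sqrt (Real.pi/(-(2*Real.log q))) * 2
      = Real.sqrt (2*Real.pi) / Real.sqrt (-Real.log q) := by
  set L := Real.log q
  have h1 : Real.sqrt (Real.pi/(-(2*L))) * Real.sqrt (-L)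
      = Real.sqrt (Real.pi/(-(2*L)) * (-L)) :=
    (Real.sqrt_mul (div_nonneg Real.pi_pos.le (by linarith)) _).symm
  have hL0 : L ≠ 0 := by intro h; rw [h] at hL; simp at hL
  have h2 : Real.pi/(-(2*L)) * (-L) = Real.pi/2 := by
    field_simp
  have h3 : Real.sqrt (2*Real.pi) = 2 * Real.sqrt (Real.pi/2) := by
    rw [show (2:ℝ)*Real.pi = 2^2*(Real.pi/2) by ring, Real.sqrt_mul (by positivity),
      Real.sqrt_sq (by norm_num)]
  rw [eq_div_iff (Real.sqrt_ne_zero'.2 hL), mul_comm _ (2:ℝ), mul_assoc, h1, h2, h3]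

end CQH

open CQH Real

theorem cont_qinv_Hermite_continuous_orthogonality
    (m n : ℕ) (q α : ℝ) (hq0 : 0 < q) (hq1 : q < 1) (hα : 0 < α) :
    ∫ x : ℝ, (1 + q ^ (2 * x) * α ^ 2) * HcR q (q ^ x * α) n * HcR q (q ^ x * α) m *
        q ^ (2 * x ^ 2 - x) * α ^ (4 * x) =
      (if m = n then (1 : ℝ) else 0) *
        (Real.sqrt (2 * Real.pi) * α * Real.exp (2 * Real.log α ^ 2 / Real.log (1 / q)) /
          (q ^ ((1 : ℝ) / 8) * Real.sqrt (Real.log (1 / q)))) *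
        q ^ (-((n : ℤ) * ((n : ℤ) - 1) / 2)) * qpR q q n / q ^ n := by
  have hL : Real.log q < 0 := Real.log_neg hq0 hq1
  set L := Real.log q with hLdef
  set A := Real.log α with hAdef
  have hc : Real.log (1/q) = -L := by rw [one_div, Real.log_inv]
  have hzpos : ∀ x : ℝ, (0:ℝ) < q ^ x * α := fun x => by positivity
  -- step 1 : pointwise expansion of the integrand
  have hU : ∀ (t x : ℝ), (q ^ x * α) ^ t * (q ^ (2*x^2 - x) * α ^ (4*x))
      = Real.exp (2*L*x^2 + ((t-1)*L + 4*A)*x + t*A) := by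
    intro t x
    rw [Real.rpow_def_of_pos (hzpos x), Real.rpow_def_of_pos hq0 (2*x^2-x),
      Real.rpow_def_of_pos hα (4*x)]
    rw [Real.log_mul (Real.rpow_pos_of_pos hq0 x).ne' hα.ne', Real.log_rpow hq0]
    rw [← Real.exp_add, ← Real.exp_add]
    congr 1
    ring
  have hpoint : ∀ x : ℝ,
      (1 + q ^ (2 * x) * α ^ 2) * HcR q (q ^ x * α) n * HcR q (q ^ x * α) m *
          q ^ (2 * x ^ 2 - x) * α ^ (4 * x)
      = ∑ k ∈ Finset.range (n+1), ∑ l ∈ Finset.range (m+1), eC q n k * eC q m l *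
          (Real.exp (2*L*x^2 + ((((n:ℝ)+m-2*k-2*l)-1)*L + 4*A)*x + ((n:ℝ)+m-2*k-2*l)*A)
           + Real.exp (2*L*x^2 + ((((n:ℝ)+m-2*k-2*l)+1)*L + 4*A)*x
              + (((n:ℝ)+m-2*k-2*l)+2)*A)) := by
    intro x
    have hz' := hzpos x
    rw [HcR_expand hq0 hq1 hz' n, HcR_expand hq0 hq1 hz' m]
    have h2 : q ^ (2*x) * α^2 = (q ^ x * α) ^ (2:ℝ) := by
      rw [show (2:ℝ) = ((2:ℕ):ℝ) by norm_num, Real.rpow_natCast, mul_pow]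
      congr 1
      rw [← Real.rpow_natCast (q ^ x) 2, ← Real.rpow_mul (le_of_lt hq0)]
      congr 1
      push_cast
      ring
    simp only [Finset.sum_mul, Finset.mul_sum]
    conv_rhs => rw [Finset.sum_comm]
    refine Finset.sum_congr rfl fun l _ => Finset.sum_congr rfl fun k _ => ?_
    have hzz1 : (q^x*α) ^ ((n:ℝ) - 2*(k:ℝ)) * (q^x*α) ^ ((m:ℝ) - 2*(l:ℝ))
        = (q^x*α) ^ ((n:ℝ)+(m:ℝ)-2*(k:ℝ)-2*(l:ℝ)) := by
      rw [← Real.rpow_add hz']; congr 1; ring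
    have hzz2 : (q^x*α) ^ ((n:ℝ)+(m:ℝ)-2*(k:ℝ)-2*(l:ℝ)) * (q^x*α) ^ (2:ℝ)
        = (q^x*α) ^ ((n:ℝ)+(m:ℝ)-2*(k:ℝ)-2*(l:ℝ)+2) := by
      rw [← Real.rpow_add hz']
    have hu1 := hU ((n:ℝ)+(m:ℝ)-2*(k:ℝ)-2*(l:ℝ)) x
    have hu2 := hU ((n:ℝ)+(m:ℝ)-2*(k:ℝ)-2*(l:ℝ)+2) x
    calc (1 + q ^ (2*x) * α^2) * (eC q n k * (q^x*α) ^ ((n:ℝ) - 2*(k:ℝ)))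
          * (eC q m l * (q^x*α) ^ ((m:ℝ) - 2*(l:ℝ))) * q ^ (2*x^2-x) * α ^ (4*x)
        = eC q n k * eC q m l *
            (((q^x*α) ^ ((n:ℝ) - 2*(k:ℝ)) * (q^x*α) ^ ((m:ℝ) - 2*(l:ℝ)))
                * (q ^ (2*x^2-x) * α ^ (4*x))
             + ((q^x*α) ^ ((n:ℝ) - 2*(k:ℝ)) * (q^x*α) ^ ((m:ℝ) - 2*(l:ℝ))
                  * (q^x*α) ^ (2:ℝ)) * (q ^ (2*x^2-x) * α ^ (4*x))) := by
          rw [h2]; ring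
      _ = _ := by
          rw [hzz1, hzz2, hu1, hu2,
            show (n:ℝ)+(m:ℝ)-2*(k:ℝ)-2*(l:ℝ)+2-1 = (n:ℝ)+(m:ℝ)-2*(k:ℝ)-2*(l:ℝ)+1 by ring]
  have hfun : (∫ x : ℝ, (1 + q ^ (2 * x) * α ^ 2) * HcR q (q ^ x * α) n * HcR q (q ^ x * α) m *
        q ^ (2 * x ^ 2 - x) * α ^ (4 * x))
      = ∫ x : ℝ, ∑ k ∈ Finset.range (n+1), ∑ l ∈ Finset.range (m+1), eC q n k * eC q m l *
          (Real.exp (2*L*x^2 + ((((n:ℝ)+m-2*k-2*l)-1)*L + 4*A)*x + ((n:ℝ)+m-2*k-2*l)*A)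
           + Real.exp (2*L*x^2 + ((((n:ℝ)+m-2*k-2*l)+1)*L + 4*A)*x
              + (((n:ℝ)+m-2*k-2*l)+2)*A)) :=
    MeasureTheory.integral_congr_ae (Filter.EventuallyEq.of_eq (funext hpoint))
  rw [hfun]
  have hL2 : 2*L < 0 := by linarith
  have hInt1 : ∀ (u v : ℝ), MeasureTheory.Integrable
      (fun x : ℝ => Real.exp (2*L*x^2 + u*x + v)) := fun u v => gauss_integrable' hL2 u v
  have hterm : ∀ (k l : ℕ), MeasureTheory.Integrable (fun x : ℝ => eC q n k * eC q m l *
      (Real.exp (2*L*x^2 + ((((n:ℝ)+m-2*k-2*l)-1)*L + 4*A)*x + ((n:ℝ)+m-2*k-2*l)*A)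
       + Real.exp (2*L*x^2 + ((((n:ℝ)+m-2*k-2*l)+1)*L + 4*A)*x
          + (((n:ℝ)+m-2*k-2*l)+2)*A))) :=
    fun k l => ((hInt1 _ _).add (hInt1 _ _)).const_mul _
  rw [MeasureTheory.integral_finset_sum _
    (fun k _ => MeasureTheory.integrable_finset_sum _ (fun l _ => hterm k l))]
  rw [Finset.sum_congr rfl
    (fun k _ => MeasureTheory.integral_finset_sum _ (fun l _ => hterm k l))]
  set Kc := Real.sqrt (Real.pi/(-(2*L))) * α * Real.exp (2*A^2/(-L)) with hKc
  have hL0 : L ≠ 0 := by linarith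
  have hIG : ∀ t : ℝ,
      (∫ x : ℝ, Real.exp (2*L*x^2 + ((t-1)*L + 4*A)*x + t*A)) = Kc * CQH.G q t := by
    intro t
    rw [gauss_integral' hL2 _ _]
    show _ = Kc * q ^ (-((t - 1) ^ 2 / 8))
    rw [Real.rpow_def_of_pos hq0, hKc]
    rw [show α = Real.exp A from (Real.exp_log hα).symm]
    rw [mul_assoc, mul_assoc, ← Real.exp_add, ← Real.exp_add]
    congr 1
    rw [← hLdef]
    congr 1
    field_simp
    ring
  have hval : ∀ k l : ℕ,
      (∫ x : ℝ, eC q n k * eC q m l *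
        (Real.exp (2*L*x^2 + ((((n:ℝ)+m-2*k-2*l)-1)*L + 4*A)*x + ((n:ℝ)+m-2*k-2*l)*A)
         + Real.exp (2*L*x^2 + ((((n:ℝ)+m-2*k-2*l)+1)*L + 4*A)*x
            + (((n:ℝ)+m-2*k-2*l)+2)*A)))
      = eC q n k * eC q m l *
          (Kc * CQH.G q ((n:ℝ)+m-2*k-2*l) + Kc * CQH.G q ((n:ℝ)+m-2*k-2*l+2)) := by
    intro k l
    rw [MeasureTheory.integral_const_mul, MeasureTheory.integral_add (hInt1 _ _) (hInt1 _ _)]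
    rw [hIG ((n:ℝ)+m-2*k-2*l)]
    have h3 := hIG ((n:ℝ)+m-2*k-2*l+2)
    rw [show ((n:ℝ)+m-2*k-2*l+2-1) = ((n:ℝ)+m-2*k-2*l+1) by ring] at h3
    rw [h3]
  rw [Finset.sum_congr rfl (fun k _ => Finset.sum_congr rfl (fun l _ => hval k l))]
  have hsum : ∑ k ∈ Finset.range (n+1), ∑ l ∈ Finset.range (m+1), eC q n k * eC q m l *
        (Kc * CQH.G q ((n:ℝ)+m-2*k-2*l) + Kc * CQH.G q ((n:ℝ)+m-2*k-2*l+2))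
      = Kc * SS q n m := by
    rw [SS, Finset.mul_sum]
    refine Finset.sum_congr rfl fun k _ => ?_
    rw [Finset.mul_sum]
    exact Finset.sum_congr rfl fun l _ => by ring
  rw [hsum, SS_eval hq0 hq1 n m, hc, qpR_q hq0 n, zpow_half hq0 n, ← Real.rpow_natCast q n]
  -- final constant matching
  have hq18 : q ^ ((1:ℝ)/8) * (q ^ (-(1:ℝ)/8 - ((n:ℝ)^2+(n:ℝ))/2) * q ^ ((n:ℝ)))
      = q ^ (-((n:ℝ)*((n:ℝ)-1))/2) := by
    rw [rpow_mul_rpow hq0, rpow_mul_rpow hq0]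
    congr 1
    ring
  have hsq := sqrt_match (q := q) (by linarith)
  have hsq' : Real.sqrt (Real.pi/(-(2*L))) * 2 * Real.sqrt (-L) = Real.sqrt (2*Real.pi) := by
    rw [eq_div_iff (Real.sqrt_ne_zero'.mpr (by linarith : (0:ℝ) < -L))] at hsq
    exact hsq
  have hkey : Kc * (2 * q ^ (-(1:ℝ)/8 - ((n:ℝ)^2+(n:ℝ))/2))
      = Real.sqrt (2*Real.pi) * α * Real.exp (2*A^2 / -L) / (q ^ ((1:ℝ)/8) * Real.sqrt (-L))
          * q ^ (-((n:ℝ)*((n:ℝ)-1))/2) / q ^ ((n:ℝ)) := by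
    have h1 : q ^ ((1:ℝ)/8) ≠ 0 := (qpow_pos hq0 _).ne'
    have h2 : q ^ ((n:ℝ)) ≠ 0 := (qpow_pos hq0 _).ne'
    have h3 : Real.sqrt (-L) ≠ 0 := Real.sqrt_ne_zero'.mpr (by linarith)
    rw [eq_div_iff h2, div_mul_eq_mul_div, eq_comm, div_eq_iff (mul_ne_zero h1 h3)]
    rw [hKc, ← hsq', ← hq18]
    ring
  linear_combination ((if m = n then (1:ℝ) else 0) * P q 1 n) * hkey
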